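/- Let f : S → E be a strictly increasing function from a set of epsilon numbers into the epsilon numbers, and let x be an ordinal with Ep(x) ⊆ S. Then the inverse function f⁻¹ : range(f) → S exists, is strictly increasing, and (x[f])[f⁻¹] = x. -/

import Mathlib

open Ordinal

/-- An ordinal is an epsilon number if it is a fixed point of `ω ^ ·`. -/
def IsEpsilon (x : Ordinal.{0}) : Prop := ω ^ x = x

theorem cnf_fst_lt {x : Ordinal.{0}} (h : ¬ ω ^ x = x) {p : Ordinal × Ordinal}
    (hp : p ∈ CNF ω x) : p.1 < x := by
  have hx : x ≠ 0 := by
    rintro rfl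
    simp [Ordinal.CNF.zero_right] at hp
  have h1 : p.1 ≤ Ordinal.log ω x := Ordinal.CNF.fst_le_log hp
  have h2 : Ordinal.log ω x < x := by
    rcases lt_or_eq_of_le (Ordinal.log_le_self ω x) with h' | h'
    · exact h'
    · exfalso
      have hle := Ordinal.opow_log_le_self ω hx
      rw [h'] at hle
      exact h (le_antisymm hle (Ordinal.right_le_opow x one_lt_omega0))
  exact lt_of_le_of_lt h1 h2

open scoped Classical in
/-- The set of epsilon numbers occurring hereditarily in the Cantor normal form of `x`. -/
noncomputable def Ep (x : Ordinal.{0}) : Set Ordinal.{0} :=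
  if h : ω ^ x = x then {x}
  else ⋃ p : {q // q ∈ CNF ω x}, Ep p.1.1
termination_by x
decreasing_by exact cnf_fst_lt h p.2

open scoped Classical in
/-- Simultaneous substitution of the epsilon numbers occurring hereditarily in the
Cantor normal form of `x` by their values under `f`. -/
noncomputable def subst (f : Ordinal.{0} → Ordinal.{0}) (x : Ordinal.{0}) : Ordinal.{0} :=
  if h : ω ^ x = x then f x
  else (((CNF ω x).attach).map (fun p => ω ^ subst f p.1.1 * p.1.2)).sum
termination_by x
decreasing_by exact cnf_fst_lt h p.2

-- basic helper lemmas

theorem eps_pos {x : Ordinal.{0}} (h : ω ^ x = x) : 0 < x := by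
  rw [← h]; exact opow_pos x omega0_pos

theorem log_lt_self_of_ne {x : Ordinal.{0}} (h : ¬ ω ^ x = x) (hx : x ≠ 0) :
    Ordinal.log ω x < x := by
  rcases lt_or_eq_of_le (Ordinal.log_le_self ω x) with h' | h'
  · exact h'
  · exfalso
    have hle := Ordinal.opow_log_le_self ω hx
    rw [h'] at hle
    exact h (le_antisymm hle (Ordinal.right_le_opow x one_lt_omega0))

theorem log_of_eps {x : Ordinal.{0}} (h : ω ^ x = x) : Ordinal.log ω x = x := by
  conv_lhs => rw [← h]
  rw [log_opow one_lt_omega0]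

theorem CNF_of_eps {x : Ordinal.{0}} (h : ω ^ x = x) : CNF ω x = [(x, 1)] := by
  have hx : x ≠ 0 := (eps_pos h).ne'
  rw [CNF.ne_zero hx, log_of_eps h, h, Ordinal.div_self hx, Ordinal.mod_self, CNF.zero_right]

theorem Ep_of_eps {x : Ordinal.{0}} (h : ω ^ x = x) : Ep x = {x} := by
  rw [Ep]; simp [h]

theorem Ep_of_ne {x : Ordinal.{0}} (h : ¬ ω ^ x = x) :
    Ep x = ⋃ p : {q // q ∈ CNF ω x}, Ep p.1.1 := by
  rw [Ep]; simp [h]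

theorem Ep_cnf_subset {x : Ordinal.{0}} (h : ¬ ω ^ x = x) {p : Ordinal × Ordinal}
    (hp : p ∈ CNF ω x) : Ep p.1 ⊆ Ep x := by
  rw [Ep_of_ne h]
  exact Set.subset_iUnion (fun q : {q // q ∈ CNF ω x} => Ep q.1.1) ⟨p, hp⟩

theorem Ep_zero : Ep 0 = ∅ := by
  rw [Ep_of_ne (by simp)]
  simp [CNF.zero_right]

theorem eps_mem_of_subset {S : Set Ordinal.{0}} {r : Ordinal.{0}} (hsub : Ep r ⊆ S)
    (hr : ω ^ r = r) : r ∈ S := by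
  apply hsub
  rw [Ep_of_eps hr]
  rfl

theorem Ep_subset_of_cnf_subset {r x : Ordinal.{0}} (hx : ¬ ω ^ x = x)
    (hsub : ∀ p ∈ CNF ω r, p ∈ CNF ω x) : Ep r ⊆ Ep x := by
  by_cases hr : ω ^ r = r
  · have h1 : (r, 1) ∈ CNF ω x := hsub _ (by rw [CNF_of_eps hr]; exact List.mem_singleton.2 rfl)
    exact Ep_cnf_subset hx h1
  · rw [Ep_of_ne hr]
    exact Set.iUnion_subset fun p => Ep_cnf_subset hx (hsub p.1 p.2)

theorem Ep_log_subset {x : Ordinal.{0}} (hx0 : x ≠ 0) (hx : ¬ ω ^ x = x) :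
    Ep (Ordinal.log ω x) ⊆ Ep x := by
  refine Ep_cnf_subset (p := (Ordinal.log ω x, x / ω ^ Ordinal.log ω x)) hx ?_
  rw [CNF.ne_zero hx0]
  exact List.mem_cons_self

theorem Ep_rest_subset {x : Ordinal.{0}} (hx0 : x ≠ 0) (hx : ¬ ω ^ x = x) :
    Ep (x % ω ^ Ordinal.log ω x) ⊆ Ep x :=
  Ep_subset_of_cnf_subset hx fun p hp => by
    rw [CNF.ne_zero hx0]; exact List.mem_cons_of_mem _ hp

-- subst equations

theorem subst_eps (f : Ordinal.{0} → Ordinal.{0}) {x : Ordinal.{0}} (h : ω ^ x = x) :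
    subst f x = f x := by
  rw [subst]; simp [h]

theorem subst_ne (f : Ordinal.{0} → Ordinal.{0}) {x : Ordinal.{0}} (h : ¬ ω ^ x = x) :
    subst f x = ((CNF ω x).map (fun p => ω ^ subst f p.1 * p.2)).sum := by
  rw [subst]
  simp only [h, dite_false]
  congr 1
  exact List.attach_map_val (l := CNF ω x) (f := fun p => ω ^ subst f p.1 * p.2)

theorem subst_zero (f : Ordinal.{0} → Ordinal.{0}) : subst f 0 = 0 := by
  rw [subst_ne f (by simp), CNF.zero_right]
  rfl

theorem cnf_sum_eq (f : Ordinal.{0} → Ordinal.{0}) {r : Ordinal.{0}}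
    (hE : ω ^ r = r → ω ^ f r = f r) :
    ((CNF ω r).map (fun p => ω ^ subst f p.1 * p.2)).sum = subst f r := by
  by_cases hr : ω ^ r = r
  · rw [CNF_of_eps hr, subst_eps f hr]
    simp [subst_eps f hr, hE hr]
  · rw [subst_ne f hr]

theorem subst_decomp (f : Ordinal.{0} → Ordinal.{0}) {x : Ordinal.{0}} (hx0 : x ≠ 0)
    (hx : ¬ ω ^ x = x)
    (hE : ω ^ (x % ω ^ Ordinal.log ω x) = x % ω ^ Ordinal.log ω x →
      ω ^ f (x % ω ^ Ordinal.log ω x) = f (x % ω ^ Ordinal.log ω x)) :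
    subst f x = ω ^ subst f (Ordinal.log ω x) * (x / ω ^ Ordinal.log ω x)
      + subst f (x % ω ^ Ordinal.log ω x) := by
  rw [subst_ne f hx, CNF.ne_zero hx0, List.map_cons, List.sum_cons, cnf_sum_eq f hE]

theorem CNF_opow_mul_add {u v w : Ordinal.{0}} (hv0 : v ≠ 0) (hv : v < ω) (hw : w < ω ^ u) :
    CNF ω (ω ^ u * v + w) = (u, v) :: CNF ω w := by
  have ho : ω ^ u * v + w ≠ 0 := (opow_mul_add_pos omega0_ne_zero u hv0 w).ne'
  have hlog : Ordinal.log ω (ω ^ u * v + w) = u := by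
    rw [log_opow_mul_add one_lt_omega0 hv0 hw, Ordinal.log_eq_zero hv, add_zero]
  have hdiv : (ω ^ u * v + w) / ω ^ u = v := by
    rw [Ordinal.mul_add_div _ (opow_ne_zero u omega0_ne_zero), Ordinal.div_eq_zero_of_lt hw,
      add_zero]
  have hmod : (ω ^ u * v + w) % ω ^ u = w := by
    rw [Ordinal.mul_add_mod_self, Ordinal.mod_eq_of_lt hw]
  rw [CNF.ne_zero ho, hlog, hdiv, hmod]

section

variable {S : Set Ordinal.{0}} {f : Ordinal.{0} → Ordinal.{0}}

theorem hE_of_subset (hfE : ∀ e ∈ S, IsEpsilon (f e)) {r : Ordinal.{0}} (hr : Ep r ⊆ S) :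
    ω ^ r = r → ω ^ f r = f r :=
  fun h => hfE r (eps_mem_of_subset hr h)

theorem subst_pos (hfE : ∀ e ∈ S, IsEpsilon (f e)) {x : Ordinal.{0}} (hx0 : x ≠ 0)
    (hxS : Ep x ⊆ S) : 0 < subst f x := by
  by_cases h : ω ^ x = x
  · rw [subst_eps f h, ← hfE x (eps_mem_of_subset hxS h)]
    exact opow_pos _ omega0_pos
  · rw [subst_decomp f hx0 h (hE_of_subset hfE ((Ep_rest_subset hx0 h).trans hxS))]
    exact opow_mul_add_pos omega0_ne_zero _ (Ordinal.div_opow_log_pos ω hx0).ne' _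

/-- Key bound: `subst f x < ω ^ (subst f (log ω x) + 1)` given the remainder bound. -/
theorem subst_lt_opow_succ (hfE : ∀ e ∈ S, IsEpsilon (f e)) {x : Ordinal.{0}} (hx0 : x ≠ 0)
    (hx : ¬ ω ^ x = x) (hxS : Ep x ⊆ S)
    (hs : subst f (x % ω ^ Ordinal.log ω x) < ω ^ subst f (Ordinal.log ω x)) :
    subst f x < ω ^ Order.succ (subst f (Ordinal.log ω x)) := by
  rw [subst_decomp f hx0 hx (hE_of_subset hfE ((Ep_rest_subset hx0 hx).trans hxS))]
  exact opow_mul_add_lt_opow (Ordinal.div_opow_log_lt x one_lt_omega0) hs (Order.lt_succ _)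

theorem mono_aux (hfE : ∀ e ∈ S, IsEpsilon (f e)) (hf : StrictMonoOn f S) :
    ∀ a : Ordinal.{0}, Ep a ⊆ S →
      (∀ x, x < a → Ep x ⊆ S → subst f x < subst f a) ∧
      (∀ y, Ep y ⊆ S → y < ω ^ a → subst f y < ω ^ subst f a) := by
  intro a
  induction a using Ordinal.induction with
  | _ a IH =>
  intro haS
  by_cases ha : ω ^ a = a
  · -- `a` is an epsilon number
    have haS' : a ∈ S := eps_mem_of_subset haS ha
    have hfa : ω ^ f a = f a := hfE a haS'
    have mono : ∀ x, x < a → Ep x ⊆ S → subst f x < subst f a := by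
      intro x
      induction x using Ordinal.induction with
      | _ x IHx =>
      intro hxa hxS
      rw [subst_eps f ha]
      by_cases hx : ω ^ x = x
      · rw [subst_eps f hx]
        exact hf (eps_mem_of_subset hxS hx) haS' hxa
      · rcases eq_or_ne x 0 with rfl | hx0
        · rw [subst_zero, ← hfa]
          exact opow_pos _ omega0_pos
        · have hex : Ordinal.log ω x < x := log_lt_self_of_ne hx hx0
          have heS : Ep (Ordinal.log ω x) ⊆ S := (Ep_log_subset hx0 hx).trans hxS
          have hsS : Ep (x % ω ^ Ordinal.log ω x) ⊆ S := (Ep_rest_subset hx0 hx).trans hxS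
          have hB := (IH _ (hex.trans hxa) heS).2 _ hsS
            (Ordinal.mod_lt x (opow_ne_zero _ omega0_ne_zero))
          have h1 : subst f (Ordinal.log ω x) < f a := by
            have h' := IHx _ hex (hex.trans hxa) heS
            rwa [subst_eps f ha] at h'
          calc subst f x < ω ^ Order.succ (subst f (Ordinal.log ω x)) :=
                subst_lt_opow_succ hfE hx0 hx hxS hB
            _ ≤ ω ^ f a := (opow_le_opow_iff_right one_lt_omega0).2 (Order.succ_le_of_lt h1)
            _ = f a := hfa
    refine ⟨mono, fun y hyS hy => ?_⟩
    rw [subst_eps f ha, hfa]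
    have h' := mono y (by rwa [ha] at hy) hyS
    rwa [subst_eps f ha] at h'
  · -- `a` is not an epsilon number
    rcases eq_or_ne a 0 with rfl | ha0
    · refine ⟨fun x hx => absurd hx (zero_le (a := x)).not_gt, fun y hyS hy => ?_⟩
      rw [opow_zero] at hy
      rw [Ordinal.lt_one_iff_zero.1 hy, subst_zero, opow_zero]
      exact zero_lt_one
    · set e := Ordinal.log ω a with he_def
      have he : e < a := log_lt_self_of_ne ha ha0
      have heS : Ep e ⊆ S := (Ep_log_subset ha0 ha).trans haS
      have hrS : Ep (a % ω ^ e) ⊆ S := (Ep_rest_subset ha0 ha).trans haS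
      have hr : a % ω ^ e < ω ^ e := Ordinal.mod_lt a (opow_ne_zero _ omega0_ne_zero)
      have hra : a % ω ^ e < a := hr.trans_le (Ordinal.opow_log_le_self ω ha0)
      have hc0 : 0 < a / ω ^ e := Ordinal.div_opow_log_pos ω ha0
      have IHe := IH e he heS
      have IHr := IH _ hra hrS
      have hdec : subst f a = ω ^ subst f e * (a / ω ^ e) + subst f (a % ω ^ e) :=
        subst_decomp f ha0 ha (hE_of_subset hfE hrS)
      have hsingle : ω ^ subst f e ≤ subst f a := by
        rw [hdec]
        calc ω ^ subst f e = ω ^ subst f e * 1 := (mul_one _).symm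
          _ ≤ ω ^ subst f e * (a / ω ^ e) :=
              mul_le_mul_right (Order.one_le_iff_pos.2 hc0) _
          _ ≤ _ := le_self_add
      have mono : ∀ x, x < a → Ep x ⊆ S → subst f x < subst f a := by
        intro x hxa hxS
        by_cases hx : ω ^ x = x
        · -- x epsilon
          have hxS' : x ∈ S := eps_mem_of_subset hxS hx
          have hxe : x ≤ e := by
            have h' := Ordinal.log_mono_right ω hxa.le
            rwa [log_of_eps hx] at h'
          rcases hxe.lt_or_eq with hlt | heq
          · have h1 := IHe.1 x hlt hxS
            calc subst f x < subst f e := h1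
              _ ≤ ω ^ subst f e := right_le_opow _ one_lt_omega0
              _ ≤ subst f a := hsingle
          · -- x = e
            have hse : subst f e = f x := by rw [← heq, subst_eps f hx]
            have hfeps : ω ^ f x = f x := hfE x hxS'
            rw [subst_eps f hx, hdec, hse, hfeps]
            rcases lt_or_eq_of_le (Order.one_le_iff_pos.2 hc0) with hc1 | hc1
            · calc f x = f x * 1 := (mul_one _).symm
                _ < f x * (a / ω ^ e) :=
                    mul_lt_mul_of_pos_left hc1 (eps_pos hfeps)
                _ ≤ _ := le_self_add
            · -- a / ω ^ e = 1
              have hrne : a % ω ^ e ≠ 0 := by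
                intro h0
                have hdm := Ordinal.div_add_mod a (ω ^ e)
                rw [← hc1, mul_one, h0, add_zero] at hdm
                have : a = x := by rw [← hdm, ← heq, hx]
                exact hxa.ne' this
              have hpos : 0 < subst f (a % ω ^ e) := subst_pos hfE hrne hrS
              calc f x = f x * (a / ω ^ e) := by rw [← hc1, mul_one]
                _ < f x * (a / ω ^ e) + subst f (a % ω ^ e) := lt_add_of_pos_right _ hpos
        · rcases eq_or_ne x 0 with rfl | hx0
          · rw [subst_zero]
            exact subst_pos hfE ha0 haS
          · have hexx : Ordinal.log ω x < x := log_lt_self_of_ne hx hx0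
            have hexS : Ep (Ordinal.log ω x) ⊆ S := (Ep_log_subset hx0 hx).trans hxS
            have hsxS : Ep (x % ω ^ Ordinal.log ω x) ⊆ S := (Ep_rest_subset hx0 hx).trans hxS
            have hBsx : subst f (x % ω ^ Ordinal.log ω x) < ω ^ subst f (Ordinal.log ω x) :=
              (IH _ (hexx.trans hxa) hexS).2 _ hsxS
                (Ordinal.mod_lt x (opow_ne_zero _ omega0_ne_zero))
            have hexe : Ordinal.log ω x ≤ e := Ordinal.log_mono_right ω hxa.le
            rcases hexe.lt_or_eq with hlt | heq
            · have h1 : subst f (Ordinal.log ω x) < subst f e := IHe.1 _ hlt hexS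
              calc subst f x < ω ^ Order.succ (subst f (Ordinal.log ω x)) :=
                    subst_lt_opow_succ hfE hx0 hx hxS hBsx
                _ ≤ ω ^ subst f e :=
                    (opow_le_opow_iff_right one_lt_omega0).2 (Order.succ_le_of_lt h1)
                _ ≤ subst f a := hsingle
            · rw [heq] at hBsx hsxS
              have hxdec : subst f x = ω ^ subst f e * (x / ω ^ e) + subst f (x % ω ^ e) := by
                have h' := subst_decomp f hx0 hx
                  (hE_of_subset hfE ((Ep_rest_subset hx0 hx).trans hxS))
                rwa [heq] at h'
              have hdx : x / ω ^ e ≤ a / ω ^ e := Ordinal.div_le_left hxa.le _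
              rcases lt_or_eq_of_le hdx with hdlt | hdeq
              · rw [hxdec, hdec]
                calc ω ^ subst f e * (x / ω ^ e) + subst f (x % ω ^ e)
                    < ω ^ subst f e * Order.succ (x / ω ^ e) :=
                      opow_mul_add_lt_opow_mul hBsx (Order.lt_succ _)
                  _ ≤ ω ^ subst f e * (a / ω ^ e) :=
                      mul_le_mul_right (Order.succ_le_of_lt hdlt) _
                  _ ≤ _ := le_self_add
              · have hmod : x % ω ^ e < a % ω ^ e := by
                  have h1 := Ordinal.div_add_mod x (ω ^ e)
                  have h2 := Ordinal.div_add_mod a (ω ^ e)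
                  rw [← h1, ← h2, hdeq] at hxa
                  exact (add_lt_add_iff_left _).1 hxa
                have h2 : subst f (x % ω ^ e) < subst f (a % ω ^ e) := IHr.1 _ hmod hsxS
                rw [hxdec, hdec, hdeq]
                exact (add_lt_add_iff_left _).2 h2
      refine ⟨mono, fun y hyS hy => ?_⟩
      by_cases hyeps : ω ^ y = y
      · have hya : y < a :=
          (opow_lt_opow_iff_right one_lt_omega0).1 (by rw [hyeps]; exact hy)
        exact (mono y hya hyS).trans_le (right_le_opow _ one_lt_omega0)
      · rcases eq_or_ne y 0 with rfl | hy0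
        · rw [subst_zero]
          exact opow_pos _ omega0_pos
        · have hey : Ordinal.log ω y < a :=
            (opow_lt_opow_iff_right one_lt_omega0).1
              ((Ordinal.opow_log_le_self ω hy0).trans_lt hy)
          have heyS : Ep (Ordinal.log ω y) ⊆ S := (Ep_log_subset hy0 hyeps).trans hyS
          have hsyS : Ep (y % ω ^ Ordinal.log ω y) ⊆ S := (Ep_rest_subset hy0 hyeps).trans hyS
          have hBsy := (IH _ hey heyS).2 _ hsyS
            (Ordinal.mod_lt y (opow_ne_zero _ omega0_ne_zero))
          have h1 : subst f (Ordinal.log ω y) < subst f a := mono _ hey heyS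
          calc subst f y < ω ^ Order.succ (subst f (Ordinal.log ω y)) :=
                subst_lt_opow_succ hfE hy0 hyeps hyS hBsy
            _ ≤ ω ^ subst f a :=
                (opow_le_opow_iff_right one_lt_omega0).2 (Order.succ_le_of_lt h1)

theorem CNF_subst (hfE : ∀ e ∈ S, IsEpsilon (f e)) (hf : StrictMonoOn f S) :
    ∀ x : Ordinal.{0}, Ep x ⊆ S →
      CNF ω (subst f x) = (CNF ω x).map (fun p => (subst f p.1, p.2)) := by
  intro x
  induction x using Ordinal.induction with
  | _ x IHx =>
  intro hxS
  by_cases hx : ω ^ x = x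
  · have hfx : ω ^ f x = f x := hfE x (eps_mem_of_subset hxS hx)
    rw [subst_eps f hx, CNF_of_eps hfx, CNF_of_eps hx]
    simp [subst_eps f hx]
  · rcases eq_or_ne x 0 with rfl | hx0
    · rw [subst_zero]
      simp [CNF.zero_right]
    · have heS : Ep (Ordinal.log ω x) ⊆ S := (Ep_log_subset hx0 hx).trans hxS
      have hsS : Ep (x % ω ^ Ordinal.log ω x) ⊆ S := (Ep_rest_subset hx0 hx).trans hxS
      have hB : subst f (x % ω ^ Ordinal.log ω x) < ω ^ subst f (Ordinal.log ω x) :=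
        (mono_aux hfE hf _ heS).2 _ hsS (Ordinal.mod_lt x (opow_ne_zero _ omega0_ne_zero))
      rw [subst_decomp f hx0 hx (hE_of_subset hfE hsS),
        CNF_opow_mul_add (Ordinal.div_opow_log_pos ω hx0).ne'
          (Ordinal.div_opow_log_lt x one_lt_omega0) hB,
        IHx _ (Ordinal.mod_opow_log_lt_self ω hx0) hsS]
      conv_rhs => rw [CNF.ne_zero hx0]
      rw [List.map_cons]

theorem sum_map_eq_foldr (l : List (Ordinal.{0} × Ordinal.{0}))
    (g : Ordinal.{0} × Ordinal.{0} → Ordinal.{0}) :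
    (l.map g).sum = l.foldr (fun p r => g p + r) 0 := by
  induction l with
  | nil => rfl
  | cons p l ih => rw [List.map_cons, List.sum_cons, List.foldr_cons, ih]

theorem subst_inv (hfE : ∀ e ∈ S, IsEpsilon (f e)) (hf : StrictMonoOn f S)
    (g : Ordinal.{0} → Ordinal.{0}) (hg : ∀ e ∈ S, g (f e) = e) :
    ∀ x : Ordinal.{0}, Ep x ⊆ S → subst g (subst f x) = x := by
  intro x
  induction x using Ordinal.induction with
  | _ x IHx =>
  intro hxS
  by_cases hx : ω ^ x = x
  · have hxS' : x ∈ S := eps_mem_of_subset hxS hx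
    rw [subst_eps f hx, subst_eps g (hfE x hxS'), hg x hxS']
  · rcases eq_or_ne x 0 with rfl | hx0
    · rw [subst_zero, subst_zero]
    · have hy : ¬ ω ^ subst f x = subst f x := by
        intro hyeps
        have h1 : CNF ω (subst f x) = [(subst f x, 1)] := CNF_of_eps hyeps
        have h2 := CNF_subst hfE hf x hxS
        rw [h1, CNF.ne_zero hx0, List.map_cons] at h2
        have h3 : subst f (Ordinal.log ω x) = subst f x := by
          have h5 := List.head_eq_of_cons_eq h2.symm
          exact congrArg Prod.fst h5
        have h4 : subst f (Ordinal.log ω x) < subst f x :=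
          (mono_aux hfE hf x hxS).1 _ (log_lt_self_of_ne hx hx0)
            ((Ep_log_subset hx0 hx).trans hxS)
        rw [h3] at h4
        exact lt_irrefl _ h4
      rw [subst_ne g hy, CNF_subst hfE hf x hxS, List.map_map]
      have hcong : ∀ p ∈ CNF ω x,
          ((fun q => ω ^ subst g q.1 * q.2) ∘ fun p => (subst f p.1, p.2)) p
            = ω ^ p.1 * p.2 := by
        intro p hp
        simp only [Function.comp_apply]
        rw [IHx p.1 (cnf_fst_lt hx hp) ((Ep_cnf_subset hx hp).trans hxS)]
      rw [List.map_congr_left hcong, sum_map_eq_foldr]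
      exact CNF.foldr ω x

end

theorem stmt4 (S : Set Ordinal.{0}) (f : Ordinal → Ordinal)
    (hS : ∀ e ∈ S, IsEpsilon e) (hfE : ∀ e ∈ S, IsEpsilon (f e))
    (hf : StrictMonoOn f S)
    (x : Ordinal) (hx : Ep x ⊆ S) :
    ∃ g : Ordinal → Ordinal, (∀ e ∈ S, g (f e) = e) ∧
      StrictMonoOn g (f '' S) ∧ subst g (subst f x) = x := by
  classical
  refine ⟨Function.invFunOn f S, ?_, ?_, ?_⟩
  · intro e he
    exact hf.injOn.leftInvOn_invFunOn he
  · rintro u ⟨a, ha, rfl⟩ v ⟨b, hb, rfl⟩ huv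
    rw [hf.injOn.leftInvOn_invFunOn ha, hf.injOn.leftInvOn_invFunOn hb]
    by_contra hab
    rcases lt_or_eq_of_le (not_lt.1 hab) with h' | h'
    · exact absurd (hf hb ha h') (not_lt.2 huv.le)
    · rw [h'] at huv
      exact lt_irrefl _ huv
  · exact subst_inv hfE hf _ (fun e he => hf.injOn.leftInvOn_invFunOn he) x hx
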